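/- Let f : ℝ^d → ℝ be differentiable with an L-Lipschitz gradient (L > 0) and bounded below by f_inf, and let {Θ_t} satisfy Θ_{t+1} = Θ_t − α_t ∇f(Θ_t) with 0 ≤ α_t ≤ 2/L for all t. Define κ_t = α_t − (L/2)α_t². Then κ_t ‖∇f(Θ_t)‖² → 0 as t → ∞. -/

import Mathlib

open Filter

local notation "⟪" x ", " y "⟫" => @inner ℝ _ _ x y

/-- Descent lemma: quadratic upper bound for a function with Lipschitz gradient. -/
lemma descent_lemma {d : ℕ} (f : EuclideanSpace ℝ (Fin d) → ℝ)
    (g : EuclideanSpace ℝ (Fin d) → EuclideanSpace ℝ (Fin d))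
    (L : ℝ) (hL : 0 < L)
    (hgrad : ∀ x, HasGradientAt f (g x) x)
    (hlip : ∀ x y, ‖g x - g y‖ ≤ L * ‖x - y‖)
    (x v : EuclideanSpace ℝ (Fin d)) :
    f (x + v) ≤ f x + ⟪g x, v⟫ + L / 2 * ‖v‖ ^ 2 := by
  set φ : ℝ → ℝ := fun s => f (x + s • v) - s * ⟪g x, v⟫ - L / 2 * s ^ 2 * ‖v‖ ^ 2 with hφ
  have hderiv : ∀ s : ℝ, HasDerivAt φ
      (⟪g (x + s • v), v⟫ - ⟪g x, v⟫ - L * s * ‖v‖ ^ 2) s := by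
    intro s
    have hc : HasDerivAt (fun s : ℝ => x + s • v) v s := by
      simpa using ((hasDerivAt_id s).smul_const v).const_add x
    have hf : HasDerivAt (fun s : ℝ => f (x + s • v)) ⟪g (x + s • v), v⟫ s := by
      have := (hgrad (x + s • v)).hasFDerivAt.comp_hasDerivAt s hc
      simp at this
      exact this
    have h2 : HasDerivAt (fun s : ℝ => s * ⟪g x, v⟫) ⟪g x, v⟫ s := by
      simpa using (hasDerivAt_id s).mul_const (⟪g x, v⟫)
    have h3 : HasDerivAt (fun s : ℝ => L / 2 * s ^ 2 * ‖v‖ ^ 2) (L * s * ‖v‖ ^ 2) s := by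
      have := ((hasDerivAt_pow 2 s).const_mul (L / 2)).mul_const (‖v‖ ^ 2)
      exact this.congr_deriv (by rw [show (2:ℕ) - 1 = 1 from rfl]; push_cast; ring)
    exact (hf.sub h2).sub h3
  have hanti : AntitoneOn φ (Set.Icc (0 : ℝ) 1) := by
    apply antitoneOn_of_deriv_nonpos (convex_Icc 0 1)
    · exact fun s _ => ((hderiv s).continuousAt).continuousWithinAt
    · exact fun s _ => (hderiv s).differentiableAt.differentiableWithinAt
    · intro s hs
      rw [interior_Icc] at hs
      rw [(hderiv s).deriv]
      have h1 : ⟪g (x + s • v), v⟫ - ⟪g x, v⟫ = ⟪g (x + s • v) - g x, v⟫ := by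
        rw [inner_sub_left]
      have h2 : ⟪g (x + s • v) - g x, v⟫ ≤ ‖g (x + s • v) - g x‖ * ‖v‖ :=
        real_inner_le_norm _ _
      have h3 : ‖g (x + s • v) - g x‖ ≤ L * (s * ‖v‖) := by
        have := hlip (x + s • v) x
        simpa [norm_smul, abs_of_nonneg hs.1.le] using this
      have : ⟪g (x + s • v), v⟫ - ⟪g x, v⟫ ≤ L * s * ‖v‖ ^ 2 := by
        rw [h1]
        calc ⟪g (x + s • v) - g x, v⟫ ≤ ‖g (x + s • v) - g x‖ * ‖v‖ := h2
          _ ≤ L * (s * ‖v‖) * ‖v‖ := by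
              exact mul_le_mul_of_nonneg_right h3 (norm_nonneg v)
          _ = L * s * ‖v‖ ^ 2 := by ring
      linarith
  have h01 : φ 1 ≤ φ 0 := hanti (by norm_num) (by norm_num) zero_le_one
  simp only [hφ, one_smul, zero_smul, add_zero, one_pow, one_mul, zero_mul,
    zero_pow, mul_zero, sub_zero] at h01
  linarith

/-- **Vanishing of the weighted squared gradient norms.**
For the gradient iteration with `0 ≤ α t ≤ 2/L` on an `L`-smooth objective bounded
below by `f_inf`, with `κ t = α t - (L/2) (α t)²`, we have
`κ t ‖g (Θ t)‖² → 0` as `t → ∞`. -/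
theorem weighted_grad_norms_tendsto_zero
    (d : ℕ) (f : EuclideanSpace ℝ (Fin d) → ℝ)
    (g : EuclideanSpace ℝ (Fin d) → EuclideanSpace ℝ (Fin d))
    (L f_inf : ℝ) (hL : 0 < L)
    (hgrad : ∀ x, HasGradientAt f (g x) x)
    (hlip : ∀ x y, ‖g x - g y‖ ≤ L * ‖x - y‖)
    (hbdd : ∀ x, f_inf ≤ f x)
    (Θ : ℕ → EuclideanSpace ℝ (Fin d)) (α : ℕ → ℝ)
    (hiter : ∀ t, Θ (t + 1) = Θ t - α t • g (Θ t))
    (hα0 : ∀ t, 0 ≤ α t) (hα2 : ∀ t, α t ≤ 2 / L) :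
    Tendsto (fun t => (α t - L / 2 * (α t) ^ 2) * ‖g (Θ t)‖ ^ 2) atTop (nhds 0) := by
  set κ : ℕ → ℝ := fun t => α t - L / 2 * (α t) ^ 2 with hκ
  have hκ0 : ∀ t, 0 ≤ κ t := by
    intro t
    have h1 : L / 2 * α t ≤ 1 := by
      rw [div_mul_eq_mul_div, mul_comm, ← div_mul_eq_mul_div]
      calc α t / 2 * L ≤ 2 / L / 2 * L := by
            apply mul_le_mul_of_nonneg_right _ hL.le
            linarith [hα2 t]
        _ = 1 := by field_simp
    have : L / 2 * (α t) ^ 2 ≤ α t := by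
      calc L / 2 * (α t) ^ 2 = (L / 2 * α t) * α t := by ring
        _ ≤ 1 * α t := mul_le_mul_of_nonneg_right h1 (hα0 t)
        _ = α t := one_mul _
    simpa [hκ] using sub_nonneg.2 this
  -- Key step inequality.
  have hstep : ∀ t, κ t * ‖g (Θ t)‖ ^ 2 ≤ f (Θ t) - f (Θ (t + 1)) := by
    intro t
    have hd := descent_lemma f g L hL hgrad hlip (Θ t) (-(α t • g (Θ t)))
    have hΘ : Θ t + -(α t • g (Θ t)) = Θ (t + 1) := by
      rw [hiter t]; abel
    rw [hΘ] at hd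
    have hinner : ⟪g (Θ t), -(α t • g (Θ t))⟫ = -(α t * ‖g (Θ t)‖ ^ 2) := by
      rw [inner_neg_right, real_inner_smul_right, real_inner_self_eq_norm_sq]
    have hnorm : ‖-(α t • g (Θ t))‖ ^ 2 = (α t) ^ 2 * ‖g (Θ t)‖ ^ 2 := by
      rw [norm_neg, norm_smul, mul_pow]
      simp [sq_abs]
    rw [hinner, hnorm] at hd
    simp only [hκ]
    nlinarith [hd]
  have hanti : Antitone (fun t => f (Θ t)) := by
    apply antitone_nat_of_succ_le
    intro t
    have h1 := hstep t
    have h2 := mul_nonneg (hκ0 t) (sq_nonneg ‖g (Θ t)‖)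
    linarith
  have hbdd' : BddBelow (Set.range fun t => f (Θ t)) :=
    ⟨f_inf, by rintro y ⟨t, rfl⟩; exact hbdd _⟩
  obtain ⟨l, hl⟩ : ∃ l, Tendsto (fun t => f (Θ t)) atTop (nhds l) :=
    ⟨_, tendsto_atTop_ciInf hanti hbdd'⟩
  have hl' : Tendsto (fun t => f (Θ (t + 1))) atTop (nhds l) :=
    hl.comp (tendsto_add_atTop_nat 1)
  have hdiff : Tendsto (fun t => f (Θ t) - f (Θ (t + 1))) atTop (nhds 0) := by
    simpa using hl.sub hl'
  exact squeeze_zero (fun t => mul_nonneg (hκ0 t) (sq_nonneg _)) hstep hdiff
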